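/- Define P_k = {u ∈ F_k \ {e} : w(u) > 0} where w is the weight on reduced words. Then F_k is the disjoint union of P_k, P_k^{-1}, and {e}; that is, for every nontrivial reduced word u, exactly one of w(u) > 0 and w(u^{-1}) > 0 holds. -/

import Mathlib

/-- A letter of the alphabet `Σ_k^±`: `(i, true)` is the positive letter `s_{i+1}`,
`(i, false)` is the negative letter `S_{i+1} = s_{i+1}⁻¹`. -/
abbrev Letter (k : ℕ) := Fin k × Bool

/-- A word is reduced if no two adjacent letters cancel. -/
def Reduced {k : ℕ} (u : List (Letter k)) : Prop :=
  u.Chain' fun x y => y ≠ (x.1, !x.2)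

/-- Contribution of a length-2 factor `xy`:
`+1` if it has the form `s_j S_i` with `j > i`, `-1` if `S_j s_i` with `j > i`, else `0`. -/
def pairVal {k : ℕ} (x y : Letter k) : ℤ :=
  if x.2 = true ∧ y.2 = false ∧ y.1 < x.1 then 1
  else if x.2 = false ∧ y.2 = true ∧ y.1 < x.1 then -1
  else 0

/-- Sum of contributions of all length-2 factors of a word. -/
def pairSum {k : ℕ} : List (Letter k) → ℤ
  | x :: y :: t => pairVal x y + pairSum (y :: t)
  | _ => 0

/-- `+1/2`, `-1/2`, or `0` according to the last letter. -/
def lastSign {k : ℕ} (u : List (Letter k)) : ℚ :=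
  match u.getLast? with
  | none => 0
  | some x => if x.2 then 1/2 else -1/2

/-- The weight function `w` of Šunić's order. -/
def w {k : ℕ} (u : List (Letter k)) : ℚ := pairSum u + lastSign u

/-- The weight transported to the free group via reduced words. -/
def W {k : ℕ} (g : FreeGroup (Fin k)) : ℚ := w g.toWord

namespace Stmt8Aux

variable {k : ℕ}

lemma lastSign_cons_cons (x y : Letter k) (t : List (Letter k)) :
    lastSign (x :: y :: t) = lastSign (y :: t) := by
  simp [lastSign, List.getLast?_cons_cons]

lemma lastSign_concat (l : List (Letter k)) (a : Letter k) :
    lastSign (l ++ [a]) = lastSign [a] := by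
  simp [lastSign, List.getLast?_concat]

lemma lastSign_concat2 (l : List (Letter k)) (b a : Letter k) :
    lastSign (l ++ [b, a]) = lastSign [a] := by
  rw [show l ++ [b, a] = (l ++ [b]) ++ [a] by simp, lastSign_concat]

lemma pairSum_concat_concat (l : List (Letter k)) (b a : Letter k) :
    pairSum (l ++ [b, a]) = pairSum (l ++ [b]) + pairVal b a := by
  induction l with
  | nil => simp [pairSum]
  | cons c l ih =>
    cases l with
    | nil => simp [pairSum]
    | cons d l' =>
      have h1 : pairSum ((c :: d :: l') ++ [b, a])
          = pairVal c d + pairSum ((d :: l') ++ [b, a]) := by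
        cases l' <;> rfl
      have h2 : pairSum ((c :: d :: l') ++ [b])
          = pairVal c d + pairSum ((d :: l') ++ [b]) := by
        cases l' <;> rfl
      rw [h1, h2, ih]; ring

lemma invRev_cons (x : Letter k) (t : List (Letter k)) :
    FreeGroup.invRev (x :: t) = FreeGroup.invRev t ++ [(x.1, !x.2)] := by
  simp [FreeGroup.invRev]

lemma lastSign_single_inv (x : Letter k) :
    lastSign [(x.1, !x.2)] = -lastSign [x] := by
  cases hb : x.2 <;> simp [lastSign, hb] <;> norm_num

lemma pair_key (x y : Letter k) (h : y ≠ (x.1, !x.2)) :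
    (pairVal x y : ℚ) + pairVal (y.1, !y.2) (x.1, !x.2)
      = lastSign [x] - lastSign [y] := by
  obtain ⟨i, bx⟩ := x
  obtain ⟨j, by'⟩ := y
  rcases lt_trichotomy i j with hij | hij | hij <;>
    cases bx <;> cases by' <;>
      simp_all [pairVal, lastSign, lt_asymm, lt_irrefl, Prod.ext_iff] <;> norm_num

lemma w_invRev (u : List (Letter k)) (hu : Reduced u) :
    w (FreeGroup.invRev u) = -w u := by
  induction u with
  | nil => simp [FreeGroup.invRev, w, pairSum, lastSign]
  | cons x t ih =>
    cases t with
    | nil =>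
      simp only [invRev_cons, FreeGroup.invRev_empty, List.nil_append]
      have h1 : w [x] = lastSign [x] := by simp [w, pairSum]
      have h2 : w [((x.1 : Fin k), !x.2)] = lastSign [((x.1 : Fin k), !x.2)] := by
        simp [w, pairSum]
      rw [h1, h2, lastSign_single_inv]
    | cons y s =>
      have hred : Reduced (y :: s) := (List.isChain_cons_cons.mp hu).2
      have hxy : y ≠ (x.1, !x.2) := (List.isChain_cons_cons.mp hu).1
      have ih' := ih hred
      have hir : FreeGroup.invRev (x :: y :: s)
          = (FreeGroup.invRev s ++ [(y.1, !y.2)]) ++ [(x.1, !x.2)] := by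
        rw [invRev_cons, invRev_cons]
      have hir2 : FreeGroup.invRev (y :: s) = FreeGroup.invRev s ++ [(y.1, !y.2)] :=
        invRev_cons y s
      have hW : w (FreeGroup.invRev (x :: y :: s))
          = w (FreeGroup.invRev (y :: s)) - lastSign [(y.1, !y.2)]
            + pairVal (y.1, !y.2) (x.1, !x.2) + lastSign [(x.1, !x.2)] := by
        rw [hir, List.append_assoc, List.singleton_append]
        simp only [w]
        rw [pairSum_concat_concat, lastSign_concat2, hir2, lastSign_concat]
        push_cast
        ring
      have hWu : w (x :: y :: s) = pairVal x y + w (y :: s) := by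
        simp only [w]
        rw [lastSign_cons_cons]
        have : pairSum (x :: y :: s) = pairVal x y + pairSum (y :: s) := rfl
        rw [this]; push_cast; ring
      rw [hW, ih', hWu, lastSign_single_inv x, lastSign_single_inv y]
      have := pair_key x y hxy
      linarith

lemma bad_pair_of_not_reduced :
    ∀ u : List (Letter k), ¬ u.Chain' (fun x y => y ≠ (x.1, !x.2)) →
      ∃ (L2 L3 : List (Letter k)) (x : Fin k) (b : Bool),
        u = L2 ++ (x, b) :: (x, !b) :: L3 := by
  intro u
  induction u with
  | nil => intro hne; exact absurd List.isChain_nil hne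
  | cons a t ih =>
    intro hne
    cases t with
    | nil => exact absurd (List.isChain_singleton a) hne
    | cons b s =>
      rw [List.Chain', List.isChain_cons_cons] at hne
      push_neg at hne
      by_cases hab : b ≠ (a.1, !a.2)
      · obtain ⟨L2, L3, x, c, hx⟩ := ih (hne hab)
        exact ⟨a :: L2, L3, x, c, by rw [hx]; rfl⟩
      · push_neg at hab
        exact ⟨[], s, a.1, a.2, by simp [hab]⟩

lemma reduced_toWord (g : FreeGroup (Fin k)) : Reduced g.toWord := by
  by_contra h
  obtain ⟨L2, L3, x, b, hx⟩ := bad_pair_of_not_reduced g.toWord h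
  have := FreeGroup.reduce_toWord g
  rw [hx] at this
  exact FreeGroup.reduce.not this

lemma W_inv (g : FreeGroup (Fin k)) : W g⁻¹ = -W g := by
  unfold W
  rw [FreeGroup.toWord_inv]
  exact w_invRev g.toWord (reduced_toWord g)

lemma W_ne_zero (g : FreeGroup (Fin k)) (hg : g ≠ 1) : W g ≠ 0 := by
  have hne : g.toWord ≠ [] := fun h => hg (FreeGroup.toWord_eq_nil_iff.mp h)
  unfold W w
  intro h
  rcases ha : g.toWord.getLast? with _ | a
  · exact hne (List.getLast?_eq_none_iff.mp ha)
  · have hl : lastSign g.toWord = if a.2 then 1/2 else -1/2 := by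
      simp [lastSign, ha]
    cases hb : a.2 <;> rw [hl, hb] at h <;> norm_num at h
    · have : ((2 * pairSum g.toWord - 1 : ℤ) : ℚ) = 0 := by push_cast; linarith
      have : (2 * pairSum g.toWord - 1 : ℤ) = 0 := by exact_mod_cast this
      omega
    · have : ((2 * pairSum g.toWord + 1 : ℤ) : ℚ) = 0 := by push_cast; linarith
      have : (2 * pairSum g.toWord + 1 : ℤ) = 0 := by exact_mod_cast this
      omega

end Stmt8Aux

/-- `F_k` is the disjoint union of `P_k`, `P_k⁻¹` and `{e}`:
for every nontrivial `g`, exactly one of `W g > 0` and `W g⁻¹ > 0` holds. -/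
theorem stmt8 (k : ℕ) (hk : 2 ≤ k) (g : FreeGroup (Fin k)) (hg : g ≠ 1) :
    Xor' (0 < W g) (0 < W g⁻¹) := by
  have h1 := Stmt8Aux.W_inv g
  have h2 := Stmt8Aux.W_ne_zero g hg
  rcases lt_or_gt_of_ne h2.symm with h | h
  · exact Or.inl ⟨h, by rw [h1]; linarith⟩
  · exact Or.inr ⟨by rw [h1]; linarith, by linarith⟩
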